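/- Let H = H_J + H_μ + H_{h^z}. Let e_{n,s} be a basis vector such that for some site b one has n_m = 0 for all m ≥ b and s_b = 1, and set Q = |{m : n_m = 1}|. Then the Krylov subspace span{H^k e_{n,s} : k ∈ ℕ} has dimension at most binomial(b−1, Q)·2^{b−1}. In particular, whenever binomial(b−1,Q)·2^{b−1} < binomial(M,Q)·2^{M}, this Krylov subspace is a proper subspace of the charge sector W_Q, so the state e_{n,s} can never explore its full symmetry sector under the dynamics. -/

import Mathlib

open scoped BigOperators

namespace QuantumBreakdown

/-- Basis index: pairs of an occupation configuration and a spin configuration. -/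
abbrev Cfg (M : ℕ) := (Fin M → Bool) × (Fin M → Bool)

/-- The Hilbert space `V_M`. -/
abbrev V (M : ℕ) := Cfg M → ℂ

/-- The basis vector `e_{n,s}`. -/
noncomputable def e (M : ℕ) (p : Cfg M) : V M := Pi.single p 1

/-- The linear operator determined by prescribed images of the basis vectors. -/
noncomputable def mkOp (M : ℕ) (f : Cfg M → V M) : V M →ₗ[ℂ] V M :=
  (Pi.basisFun ℂ (Cfg M)).constr ℂ f

/-- The left site of edge `m`. -/
def sL (M : ℕ) (m : Fin (M - 1)) : Fin M := ⟨m.1, by have := m.2; omega⟩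

/-- The right site of edge `m`. -/
def sR (M : ℕ) (m : Fin (M - 1)) : Fin M := ⟨m.1 + 1, by have := m.2; omega⟩

/-- Move a fermion from site `a` to site `b`. -/
def hop (M : ℕ) (n : Fin M → Bool) (a b : Fin M) : Fin M → Bool :=
  Function.update (Function.update n a false) b true

/-- The hopping term `H_γ`. -/
noncomputable def Hgam (M : ℕ) (γ : Fin (M - 1) → ℝ) : V M →ₗ[ℂ] V M :=
  mkOp M fun p =>
    -∑ m : Fin (M - 1), (γ m : ℂ) •
      ((if p.1 (sL M m) = true ∧ p.1 (sR M m) = false then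
          e M (hop M p.1 (sL M m) (sR M m), p.2) else 0)
        +
       (if p.1 (sR M m) = true ∧ p.1 (sL M m) = false then
          e M (hop M p.1 (sR M m) (sL M m), p.2) else 0))

/-- The breakdown interaction `H_J`. -/
noncomputable def HJop (M : ℕ) (J : Fin (M - 1) → ℝ) : V M →ₗ[ℂ] V M :=
  mkOp M fun p =>
    ∑ m : Fin (M - 1), (J m : ℂ) •
      ((if p.1 (sL M m) = true ∧ p.1 (sR M m) = false ∧ p.2 (sR M m) = false then
          e M (hop M p.1 (sL M m) (sR M m), Function.update p.2 (sR M m) true) else 0)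
        +
       (if p.1 (sR M m) = true ∧ p.1 (sL M m) = false ∧ p.2 (sR M m) = true then
          e M (hop M p.1 (sR M m) (sL M m), Function.update p.2 (sR M m) false) else 0))

/-- The on-site potential `H_μ`. -/
noncomputable def Hmu (M : ℕ) (μ : Fin M → ℝ) : V M →ₗ[ℂ] V M :=
  mkOp M fun p => (∑ m : Fin M, if p.1 m = true then (μ m : ℂ) else 0) • e M p

/-- Pauli `σ^x` at site `m`. -/
noncomputable def sigx (M : ℕ) (m : Fin M) : V M →ₗ[ℂ] V M :=
  mkOp M fun p => e M (p.1, Function.update p.2 m (!p.2 m))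

/-- Pauli `σ^y` at site `m`. -/
noncomputable def sigy (M : ℕ) (m : Fin M) : V M →ₗ[ℂ] V M :=
  mkOp M fun p =>
    (if p.2 m = true then Complex.I else -Complex.I) • e M (p.1, Function.update p.2 m (!p.2 m))

/-- Pauli `σ^z` at site `m`. -/
noncomputable def sigz (M : ℕ) (m : Fin M) : V M →ₗ[ℂ] V M :=
  mkOp M fun p => (if p.2 m = true then (1 : ℂ) else -1) • e M p

/-- The magnetic field term `H_h`. -/
noncomputable def Hh (M : ℕ) (hx hy hz : Fin M → ℝ) : V M →ₗ[ℂ] V M :=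
  ∑ m : Fin M, ((hx m : ℂ) • sigx M m + (hy m : ℂ) • sigy M m + (hz m : ℂ) • sigz M m)

/-- Number of occupied sites of an occupation configuration. -/
def nOcc (M : ℕ) (n : Fin M → Bool) : ℕ := (Finset.univ.filter fun m => n m = true).card

/-- The number operator `N`. -/
noncomputable def numOp (M : ℕ) : V M →ₗ[ℂ] V M :=
  mkOp M fun p => (nOcc M p.1 : ℂ) • e M p

/-- The charge-`Q` sector `W_Q`. -/
noncomputable def sector (M Q : ℕ) : Submodule ℂ (V M) :=
  Submodule.span ℂ { v | ∃ p : Cfg M, nOcc M p.1 = Q ∧ v = e M p }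

/-- The charge-`Q` sector with first spin up, `W_Q^↑`. -/
noncomputable def sectorUp (M : ℕ) (hM : 0 < M) (Q : ℕ) : Submodule ℂ (V M) :=
  Submodule.span ℂ { v | ∃ p : Cfg M, nOcc M p.1 = Q ∧ p.2 ⟨0, hM⟩ = true ∧ v = e M p }

end QuantumBreakdown

open Module
namespace BlockadeAux
open QuantumBreakdown

lemma e_eq_basis (M : ℕ) (p : Cfg M) : e M p = Pi.basisFun ℂ (Cfg M) p := by
  simp [e, Pi.basisFun_apply]

lemma mkOp_apply_e (M : ℕ) (f : Cfg M → V M) (p : Cfg M) : mkOp M f (e M p) = f p := by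
  rw [e_eq_basis, mkOp, Basis.constr_basis]

lemma e_inj (M : ℕ) : Function.Injective (e M) := by
  intro p q h
  by_contra hne
  have h1 := congrFun h p
  simp [e, Pi.single_apply, hne] at h1

lemma nOcc_hop (M : ℕ) (n : Fin M → Bool) (a c : Fin M) (hac : a ≠ c)
    (ha : n a = true) (hc : n c = false) : nOcc M (hop M n a c) = nOcc M n := by
  classical
  unfold nOcc
  have hset : (Finset.univ.filter fun m => hop M n a c m = true)
      = insert c ((Finset.univ.filter fun m => n m = true).erase a) := by
    ext m
    by_cases h1 : m = c <;> by_cases h2 : m = a <;>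
      simp_all [hop, Function.update_apply]
  rw [hset, Finset.card_insert_of_notMem (by simp [hc]),
    Finset.card_erase_of_mem (by simp [ha])]
  have : 0 < (Finset.univ.filter fun m => n m = true).card :=
    Finset.card_pos.2 ⟨a, by simp [ha]⟩
  omega

/-- The blockade-invariant set of configurations. -/
def good (M : ℕ) (b : Fin M) (s : Fin M → Bool) (Q : ℕ) : Set (Cfg M) :=
  {p | (∀ m, b ≤ m → p.1 m = false) ∧ (∀ m, b ≤ m → p.2 m = s m) ∧ nOcc M p.1 = Q}

lemma H_mem (M : ℕ) (J : Fin (M-1) → ℝ) (μ : Fin M → ℝ) (hz : Fin M → ℝ)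
    (b : Fin M) (s : Fin M → Bool) (Q : ℕ) (hsb : s b = true)
    (p : Cfg M) (hp : p ∈ good M b s Q) :
    (HJop M J + Hmu M μ + ∑ m : Fin M, (hz m : ℂ) • sigz M m) (e M p)
      ∈ Submodule.span ℂ (e M '' good M b s Q) := by
  obtain ⟨hocc, hspin, hQ⟩ := hp
  have hpg : p ∈ good M b s Q := ⟨hocc, hspin, hQ⟩
  simp only [LinearMap.add_apply, LinearMap.sum_apply, LinearMap.smul_apply]
  refine Submodule.add_mem _ (Submodule.add_mem _ ?_ ?_) ?_
  · -- HJop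
    rw [HJop, mkOp_apply_e]
    refine Submodule.sum_mem _ fun m _ => Submodule.smul_mem _ _ (Submodule.add_mem _ ?_ ?_)
    · split_ifs with h
      · obtain ⟨h1, h2, h3⟩ := h
        have hL : (sL M m).1 < b.1 := by
          by_contra hc
          have : p.1 (sL M m) = false := hocc _ (by rw [Fin.le_def]; omega)
          simp [this] at h1
        have hRb : sR M m ≠ b := by
          intro hc
          rw [hc, hspin b le_rfl, hsb] at h3
          simp at h3
        have hR : (sR M m).1 < b.1 := by
          have h4 : (sR M m).1 ≤ b.1 := by simp [sR, sL] at hL ⊢; omega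
          rcases lt_or_eq_of_le h4 with h5 | h5
          · exact h5
          · exact absurd (Fin.ext h5) hRb
        refine Submodule.subset_span ⟨_, ⟨?_, ?_, ?_⟩, rfl⟩
        · intro m' hm'
          rw [Fin.le_def] at hm'
          have hne1 : m' ≠ sR M m := by intro hc; subst hc; omega
          have hne2 : m' ≠ sL M m := by intro hc; subst hc; omega
          show Function.update (Function.update p.1 (sL M m) false) (sR M m) true m' = false
          rw [Function.update_of_ne hne1, Function.update_of_ne hne2]
          exact hocc _ (Fin.le_def.2 hm')
        · intro m' hm'
          rw [Fin.le_def] at hm'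
          have hne1 : m' ≠ sR M m := by intro hc; subst hc; omega
          show Function.update p.2 (sR M m) true m' = s m'
          rw [Function.update_of_ne hne1]
          exact hspin _ (Fin.le_def.2 hm')
        · show nOcc M (hop M p.1 (sL M m) (sR M m)) = Q
          rw [nOcc_hop M p.1 _ _ (by simp [sL, sR, Fin.ext_iff]) h1 h2]
          exact hQ
      · exact Submodule.zero_mem _
    · split_ifs with h
      · obtain ⟨h1, h2, h3⟩ := h
        have hR : (sR M m).1 < b.1 := by
          by_contra hc
          have : p.1 (sR M m) = false := hocc _ (by rw [Fin.le_def]; omega)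
          simp [this] at h1
        have hL : (sL M m).1 < b.1 := by simp [sR, sL] at hR ⊢; omega
        refine Submodule.subset_span ⟨_, ⟨?_, ?_, ?_⟩, rfl⟩
        · intro m' hm'
          rw [Fin.le_def] at hm'
          have hne1 : m' ≠ sL M m := by intro hc; subst hc; omega
          have hne2 : m' ≠ sR M m := by intro hc; subst hc; omega
          show Function.update (Function.update p.1 (sR M m) false) (sL M m) true m' = false
          rw [Function.update_of_ne hne1, Function.update_of_ne hne2]
          exact hocc _ (Fin.le_def.2 hm')
        · intro m' hm'
          rw [Fin.le_def] at hm'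
          have hne1 : m' ≠ sR M m := by intro hc; subst hc; omega
          show Function.update p.2 (sR M m) false m' = s m'
          rw [Function.update_of_ne hne1]
          exact hspin _ (Fin.le_def.2 hm')
        · show nOcc M (hop M p.1 (sR M m) (sL M m)) = Q
          rw [nOcc_hop M p.1 _ _ (by simp [sL, sR, Fin.ext_iff]) h1 h2]
          exact hQ
      · exact Submodule.zero_mem _
  · rw [Hmu, mkOp_apply_e]
    exact Submodule.smul_mem _ _ (Submodule.subset_span ⟨p, hpg, rfl⟩)
  · refine Submodule.sum_mem _ fun m _ => Submodule.smul_mem _ _ ?_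
    rw [sigz, mkOp_apply_e]
    exact Submodule.smul_mem _ _ (Submodule.subset_span ⟨p, hpg, rfl⟩)
/-- Boolean functions of a given weight vs. finsets of a given card. -/
def weightEquiv (α : Type*) [Fintype α] [DecidableEq α] (Q : ℕ) :
    {f : α → Bool // (Finset.univ.filter fun a => f a = true).card = Q}
      ≃ {t : Finset α // t.card = Q} where
  toFun f := ⟨Finset.univ.filter fun a => f.1 a = true, f.2⟩
  invFun t := ⟨fun a => decide (a ∈ t.1), by simpa using t.2⟩
  left_inv f := by
    ext a
    simp
  right_inv t := by
    apply Subtype.ext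
    ext a
    simp

lemma card_weight (α : Type*) [Fintype α] [DecidableEq α] (Q : ℕ) :
    Fintype.card {f : α → Bool // (Finset.univ.filter fun a => f a = true).card = Q}
      = (Fintype.card α).choose Q := by
  rw [Fintype.card_congr (weightEquiv α Q), Fintype.card_finset_len]

def toLeft (M : ℕ) (b : Fin M) (i : Fin b.1) : Fin M := ⟨i.1, i.2.trans b.2⟩

lemma card_good_le (M : ℕ) (b : Fin M) (s : Fin M → Bool) (Q : ℕ) :
    Nat.card (good M b s Q) ≤ Nat.choose b.1 Q * 2 ^ b.1 := by
  classical
  have hwt : ∀ p : good M b s Q,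
      (Finset.univ.filter fun i : Fin b.1 => p.1.1 (toLeft M b i) = true).card = Q := by
    rintro ⟨p, hocc, hspin, hQ⟩
    show (Finset.univ.filter fun i => p.1 (toLeft M b i) = true).card = Q
    rw [← hQ]
    unfold nOcc
    apply Finset.card_bij (fun i _ => toLeft M b i)
    · intro i hi
      simp only [Finset.mem_filter, Finset.mem_univ, true_and] at hi ⊢
      exact hi
    · intro i _ j _ hij
      simpa [toLeft, Fin.ext_iff] using hij
    · intro m hm
      simp only [Finset.mem_filter, Finset.mem_univ, true_and] at hm
      have hmb : m.1 < b.1 := by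
        by_contra hc
        rw [hocc m (by rw [Fin.le_def]; omega)] at hm
        simp at hm
      exact ⟨⟨m.1, hmb⟩, by simp only [Finset.mem_filter, Finset.mem_univ, true_and]; exact hm, by simp [toLeft]⟩
  let Φ : good M b s Q →
      {f : Fin b.1 → Bool // (Finset.univ.filter fun i => f i = true).card = Q}
        × (Fin b.1 → Bool) :=
    fun p => (⟨fun i => p.1.1 (toLeft M b i), hwt p⟩, fun i => p.1.2 (toLeft M b i))
  have hinj : Function.Injective Φ := by
    rintro ⟨p, hocc, hspin, hQ⟩ ⟨q, qocc, qspin, qQ⟩ h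
    obtain ⟨h1, h2⟩ := Prod.mk.injEq .. ▸ h
    have h1' := congrArg Subtype.val h1
    apply Subtype.ext
    have key : ∀ (f g : Fin M → Bool), (∀ i : Fin b.1, f (toLeft M b i) = g (toLeft M b i)) →
        (∀ m, b ≤ m → f m = false) → (∀ m, b ≤ m → g m = false) → f = g := by
      intro f g hfg hf hg
      funext m
      by_cases hm : m.1 < b.1
      · have : m = toLeft M b ⟨m.1, hm⟩ := Fin.ext rfl
        rw [this]; exact hfg _
      · rw [hf m (by rw [Fin.le_def]; omega), hg m (by rw [Fin.le_def]; omega)]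
    have e1 : p.1 = q.1 := key p.1 q.1 (fun i => congrFun h1' i) hocc qocc
    have e2 : p.2 = q.2 := by
      funext m
      by_cases hm : m.1 < b.1
      · have hmt : m = toLeft M b ⟨m.1, hm⟩ := Fin.ext rfl
        rw [hmt]; exact congrFun h2 _
      · rw [hspin m (by rw [Fin.le_def]; omega), qspin m (by rw [Fin.le_def]; omega)]
    exact Prod.ext e1 e2
  calc Nat.card (good M b s Q) ≤ Nat.card ({f : Fin b.1 → Bool //
          (Finset.univ.filter fun i => f i = true).card = Q} × (Fin b.1 → Bool)) :=
        Nat.card_le_card_of_injective Φ hinj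
    _ = Nat.choose b.1 Q * 2 ^ b.1 := by
        simp [Nat.card_eq_fintype_card, Fintype.card_prod, card_weight, Fintype.card_fun]
lemma sector_eq_span (M Q : ℕ) :
    sector M Q = Submodule.span ℂ
      (Set.range (fun x : {p : Cfg M // nOcc M p.1 = Q} => e M x.1)) := by
  unfold sector
  congr 1
  ext v
  simp only [Set.mem_setOf_eq, Set.mem_range, Subtype.exists]
  constructor
  · rintro ⟨p, hp, rfl⟩; exact ⟨p, hp, rfl⟩
  · rintro ⟨p, hp, rfl⟩; exact ⟨p, hp, rfl⟩

lemma finrank_sector (M Q : ℕ) :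
    Module.finrank ℂ (sector M Q) = Nat.choose M Q * 2 ^ M := by
  classical
  rw [sector_eq_span]
  have hli : LinearIndependent ℂ (fun x : {p : Cfg M // nOcc M p.1 = Q} => e M x.1) := by
    have hfe : (fun x : {p : Cfg M // nOcc M p.1 = Q} => e M x.1)
        = (Pi.basisFun ℂ (Cfg M)) ∘ Subtype.val := by
      funext x; exact e_eq_basis M x.1
    rw [hfe]
    exact (Pi.basisFun ℂ (Cfg M)).linearIndependent.comp Subtype.val Subtype.val_injective
  rw [finrank_span_eq_card hli]
  have he : {p : Cfg M // nOcc M p.1 = Q}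
      ≃ {n : Fin M → Bool // nOcc M n = Q} × (Fin M → Bool) :=
    { toFun := fun p => (⟨p.1.1, p.2⟩, p.1.2)
      invFun := fun x => ⟨(x.1.1, x.2), x.1.2⟩
      left_inv := fun _ => rfl
      right_inv := fun _ => rfl }
  have hcw : Fintype.card {n : Fin M → Bool // nOcc M n = Q} = Nat.choose M Q := by
    have h := card_weight (Fin M) Q
    rw [Fintype.card_fin] at h
    exact Eq.trans (Fintype.card_congr (Equiv.subtypeEquivRight (fun n => by
      simp [nOcc]))) h
  rw [Fintype.card_congr he, Fintype.card_prod, hcw, Fintype.card_fun,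
    Fintype.card_bool, Fintype.card_fin]

end BlockadeAux

open QuantumBreakdown

/-- Krylov dimension bound from a blockade. If the basis vector
`e_{n,s}` has no fermions at sites `≥ b` and an up spin at site `b`, and
`Q = |{m : n_m = 1}|`, then the Krylov subspace `span{H^k e_{n,s}}` of the
no-hopping breakdown model has dimension at most `binom(b−1,Q)·2^{b−1}`
(here `b−1 = b.1` sites lie strictly to the left of `b`); in particular,
whenever `binom(b−1,Q)·2^{b−1} < binom(M,Q)·2^M`, the Krylov subspace is a
proper subspace of the charge sector `W_Q`. -/
theorem blockade_krylov_bound (M : ℕ) (hM : 2 ≤ M)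
    (J : Fin (M - 1) → ℝ) (μ : Fin M → ℝ) (hz : Fin M → ℝ)
    (n s : Fin M → Bool) (b : Fin M)
    (hn : ∀ m, b ≤ m → n m = false) (hs : s b = true) :
    let H : V M →ₗ[ℂ] V M := HJop M J + Hmu M μ + ∑ m : Fin M, (hz m : ℂ) • sigz M m
    let Q : ℕ := nOcc M n
    Module.finrank ℂ
        ↥(Submodule.span ℂ (Set.range fun k : ℕ => (H ^ k) (e M (n, s))))
      ≤ Nat.choose b.1 Q * 2 ^ b.1
    ∧ (Nat.choose b.1 Q * 2 ^ b.1 < Nat.choose M Q * 2 ^ M →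
        Submodule.span ℂ (Set.range fun k : ℕ => (H ^ k) (e M (n, s))) < sector M Q) := by
  classical
  intro H Q
  set G : Set (Cfg M) := BlockadeAux.good M b s Q with hG
  set S : Submodule ℂ (V M) := Submodule.span ℂ (e M '' G) with hSdef
  have hmemG : (n, s) ∈ G := ⟨hn, fun _ _ => rfl, rfl⟩
  have hmap : Submodule.map H S ≤ S := by
    rw [hSdef, Submodule.map_span, Submodule.span_le]
    rintro _ ⟨_, ⟨p, hp, rfl⟩, rfl⟩
    exact BlockadeAux.H_mem M J μ hz b s Q hs p hp
  have hk : ∀ k : ℕ, (H ^ k) (e M (n, s)) ∈ S := by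
    intro k
    induction k with
    | zero =>
      have him : e M (n, s) ∈ e M '' G := ⟨(n, s), hmemG, rfl⟩
      simpa using Submodule.subset_span him
    | succ k ih =>
      rw [pow_succ']
      exact hmap (Submodule.mem_map_of_mem ih)
  have hKS : Submodule.span ℂ (Set.range fun k : ℕ => (H ^ k) (e M (n, s))) ≤ S := by
    rw [Submodule.span_le]; rintro _ ⟨k, rfl⟩; exact hk k
  haveI : Fintype (e M '' G) := Set.Finite.fintype (Set.toFinite _)
  haveI : Fintype G := Set.Finite.fintype (Set.toFinite _)
  have hScard : Module.finrank ℂ S ≤ Nat.choose b.1 Q * 2 ^ b.1 := by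
    calc Module.finrank ℂ S ≤ (e M '' G).toFinset.card := finrank_span_le_card _
      _ = Fintype.card (e M '' G) := Set.toFinset_card _
      _ = Fintype.card G := Set.card_image_of_injective _ (BlockadeAux.e_inj M)
      _ = Nat.card G := (Nat.card_eq_fintype_card).symm
      _ ≤ _ := BlockadeAux.card_good_le M b s Q
  have hfr : Module.finrank ℂ
      ↥(Submodule.span ℂ (Set.range fun k : ℕ => (H ^ k) (e M (n, s))))
        ≤ Nat.choose b.1 Q * 2 ^ b.1 :=
    le_trans (Submodule.finrank_mono hKS) hScard
  refine ⟨hfr, fun hlt => ?_⟩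
  have hle : Submodule.span ℂ (Set.range fun k : ℕ => (H ^ k) (e M (n, s)))
      ≤ sector M Q := by
    refine le_trans hKS ?_
    rw [BlockadeAux.sector_eq_span M Q, hSdef]
    refine Submodule.span_mono ?_
    rintro _ ⟨p, hp, rfl⟩
    exact ⟨⟨p, hp.2.2⟩, rfl⟩
  refine Submodule.lt_of_le_of_finrank_lt_finrank hle ?_
  rw [BlockadeAux.finrank_sector M Q]
  exact lt_of_le_of_lt hfr hlt
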